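/- Under Assumptions S, I, and A, the rescaled HC0 sandwich estimator n · (XᵀX)⁻¹ (Σ_{i=1}^n x_i x_iᵀ r̂_i²) (XᵀX)⁻¹, with residuals r̂_i := f(z_i) − x_iᵀβ̂_n, converges in probability (entrywise) to the asymptotic covariance matrix Σxx⁻¹ Ω Σxx⁻¹, where Ω := E[x xᵀ (f(z) − xᵀβ*)²]. -/

import Mathlib

open MeasureTheory ProbabilityTheory Matrix Filter

noncomputable section

/-- Population Gram matrix `Σxx = E[x xᵀ]`. -/
def SigmaXX {Ω : Type*} [MeasurableSpace Ω] (μ : Measure Ω) {p : ℕ}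
    (x : Ω → Fin p → ℝ) : Matrix (Fin p) (Fin p) ℝ :=
  Matrix.of fun a b => ∫ ω, x ω a * x ω b ∂μ

/-- Population linear projection coefficient `β* = Σxx⁻¹ E[x f(z)]`. -/
def betaStar {Ω : Type*} [MeasurableSpace Ω] (μ : Measure Ω) {p q : ℕ}
    (x : Ω → Fin p → ℝ) (z : Ω → Fin q → ℝ) (f : (Fin q → ℝ) → ℝ) : Fin p → ℝ :=
  (SigmaXX μ x)⁻¹ *ᵥ fun a => ∫ ω, x ω a * f (z ω) ∂μ

/-- `Ω = E[x xᵀ (f(z) − xᵀβ*)²]`. -/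
def OmegaMat {Ω : Type*} [MeasurableSpace Ω] (μ : Measure Ω) {p q : ℕ}
    (x : Ω → Fin p → ℝ) (z : Ω → Fin q → ℝ) (f : (Fin q → ℝ) → ℝ) :
    Matrix (Fin p) (Fin p) ℝ :=
  Matrix.of fun a b =>
    ∫ ω, x ω a * x ω b * (f (z ω) - x ω ⬝ᵥ betaStar μ x z f) ^ 2 ∂μ

/-- Sample Gram matrix `XᵀX` from the first `n` observations. -/
def gramN {Ω : Type*} {p : ℕ} (X : ℕ → Ω → Fin p → ℝ) (n : ℕ) (ω : Ω) :
    Matrix (Fin p) (Fin p) ℝ :=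
  ∑ i ∈ Finset.range n, vecMulVec (X i ω) (X i ω)

/-- OLS estimator `β̂ₙ = (XᵀX)⁻¹ XᵀF` (junk value `0` when `XᵀX` is singular). -/
def olsN {Ω : Type*} {p q : ℕ} (X : ℕ → Ω → Fin p → ℝ) (Z : ℕ → Ω → Fin q → ℝ)
    (f : (Fin q → ℝ) → ℝ) (n : ℕ) (ω : Ω) : Fin p → ℝ :=
  (gramN X n ω)⁻¹ *ᵥ ∑ i ∈ Finset.range n, f (Z i ω) • X i ω

/-- Rescaled HC0 sandwich estimator
`n · (XᵀX)⁻¹ (∑ᵢ xᵢ xᵢᵀ r̂ᵢ²) (XᵀX)⁻¹` with residuals `r̂ᵢ = f(zᵢ) − xᵢᵀβ̂ₙ`. -/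
def sandwichN {Ω : Type*} {p q : ℕ} (X : ℕ → Ω → Fin p → ℝ) (Z : ℕ → Ω → Fin q → ℝ)
    (f : (Fin q → ℝ) → ℝ) (n : ℕ) (ω : Ω) : Matrix (Fin p) (Fin p) ℝ :=
  (n : ℝ) • ((gramN X n ω)⁻¹ *
    (∑ i ∈ Finset.range n,
      (f (Z i ω) - X i ω ⬝ᵥ olsN X Z f n ω) ^ 2 • vecMulVec (X i ω) (X i ω)) *
    (gramN X n ω)⁻¹)


open Topology


lemma aux_smul_inv {p : ℕ} (c : ℝ) (hc : c ≠ 0) (A : Matrix (Fin p) (Fin p) ℝ) :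
    (c • A)⁻¹ = c⁻¹ • A⁻¹ := by
  rcases Nat.eq_zero_or_pos p with h | h
  · subst h; exact Subsingleton.elim _ _
  obtain ⟨m, rfl⟩ := Nat.exists_eq_add_of_lt h
  rw [Matrix.inv_def, Matrix.inv_def, Matrix.det_smul, Matrix.adjugate_smul,
    smul_smul, smul_smul]
  congr 1
  simp only [Fintype.card_fin, Ring.inverse_eq_inv']
  rcases eq_or_ne A.det 0 with hd | hd
  · simp [hd]
  · field_simp
    ring_nf
    simp [Nat.add_sub_cancel_left]

lemma aux_measurable_det {Ω : Type*} [MeasurableSpace Ω] {p : ℕ}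
    {M : Ω → Matrix (Fin p) (Fin p) ℝ} (h : ∀ i j, Measurable fun ω => M ω i j) :
    Measurable fun ω => (M ω).det := by
  simp_rw [Matrix.det_apply]
  exact Finset.measurable_sum _ fun σ _ =>
    (Finset.measurable_prod _ fun i _ => h (σ i) i).const_smul _

lemma aux_measurable_inv {Ω : Type*} [MeasurableSpace Ω] {p : ℕ}
    {M : Ω → Matrix (Fin p) (Fin p) ℝ} (h : ∀ i j, Measurable fun ω => M ω i j)
    (i j : Fin p) : Measurable fun ω => (M ω)⁻¹ i j := by
  simp_rw [Matrix.inv_def, Matrix.smul_apply, Matrix.adjugate_apply, smul_eq_mul,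
    Ring.inverse_eq_inv']
  refine (measurable_inv.comp (aux_measurable_det h)).mul (aux_measurable_det ?_)
  intro a b
  simp_rw [Matrix.updateRow_apply]
  exact Measurable.ite (MeasurableSet.const _) measurable_const (h a b)

lemma aux_cont_inv {p : ℕ} (A : Matrix (Fin p) (Fin p) ℝ) (h : A.det ≠ 0) :
    ContinuousAt Inv.inv A := by
  apply continuousAt_matrix_inv
  rw [Ring.inverse_eq_inv']
  exact continuousAt_inv₀ h


lemma aux_sum_dot {p : ℕ} (n : ℕ) (A : ℕ → ℝ) (x : ℕ → Fin p → ℝ) (d : Fin p → ℝ) :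
    ∑ i ∈ Finset.range n, A i * (x i ⬝ᵥ d)
      = ∑ c : Fin p, d c * ∑ i ∈ Finset.range n, A i * x i c := by
  simp_rw [dotProduct, Finset.mul_sum]
  rw [Finset.sum_comm]
  exact Finset.sum_congr rfl fun c _ => Finset.sum_congr rfl fun i _ => by ring

lemma aux_key {p : ℕ} (n : ℕ) (x : ℕ → Fin p → ℝ) (r : ℕ → ℝ) (e : Fin p → ℝ)
    (k l : Fin p) :
    ∑ i ∈ Finset.range n, (r i - x i ⬝ᵥ e) ^ 2 * (x i k * x i l)
      = (∑ i ∈ Finset.range n, x i k * x i l * r i ^ 2)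
        - ∑ c : Fin p, e c *
            (2 * ∑ i ∈ Finset.range n, x i k * x i l * x i c * r i
              - ∑ d : Fin p, e d *
                  ∑ i ∈ Finset.range n, x i k * x i l * x i c * x i d) := by
  have h1 : ∀ i ∈ Finset.range n, (r i - x i ⬝ᵥ e) ^ 2 * (x i k * x i l)
      = x i k * x i l * r i ^ 2
        - ((2 * r i - x i ⬝ᵥ e) * (x i k * x i l)) * (x i ⬝ᵥ e) := fun i _ => by ring
  rw [Finset.sum_congr rfl h1, Finset.sum_sub_distrib]
  congr 1
  rw [aux_sum_dot n (fun i => (2 * r i - x i ⬝ᵥ e) * (x i k * x i l)) x e]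
  refine Finset.sum_congr rfl fun c _ => ?_
  congr 1
  have h2 : ∀ i ∈ Finset.range n, ((2 * r i - x i ⬝ᵥ e) * (x i k * x i l)) * x i c
      = 2 * (x i k * x i l * x i c * r i)
        - (x i k * x i l * x i c) * (x i ⬝ᵥ e) := fun i _ => by ring
  rw [Finset.sum_congr rfl h2, Finset.sum_sub_distrib]
  congr 1
  · rw [Finset.mul_sum]
  · exact aux_sum_dot n (fun i => x i k * x i l * x i c) x e

lemma aux_dist {γ δ : Type*} (s : Finset γ) (s' : Finset δ) (t a : ℝ)
    (w b : γ → ℝ) (v : δ → ℝ) (e : γ → δ → ℝ) :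
    t * (a - ∑ c ∈ s, w c * (2 * b c - ∑ d ∈ s', v d * e c d))
      = t * a - ∑ c ∈ s, w c * (2 * (t * b c) - ∑ d ∈ s', v d * (t * e c d)) := by
  rw [mul_sub, Finset.mul_sum]
  congr 1
  refine Finset.sum_congr rfl fun c _ => ?_
  have h : ∑ d ∈ s', v d * (t * e c d) = t * ∑ d ∈ s', v d * e c d := by
    rw [Finset.mul_sum]; exact Finset.sum_congr rfl fun d _ => by ring
  rw [h]; ring


/-- consistency of the HC0 sandwich estimator. Under Assumptions
S, I and A, the rescaled HC0 sandwich estimator converges in probability, entrywise,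
to the asymptotic covariance matrix `Σxx⁻¹ Ω Σxx⁻¹` where `Ω = E[x xᵀ (f(z) − xᵀβ*)²]`. -/
theorem sandwich_consistent
    {Ω : Type*} [MeasurableSpace Ω] (μ : Measure Ω) [IsProbabilityMeasure μ]
    {p q : ℕ} (X : ℕ → Ω → Fin p → ℝ) (Z : ℕ → Ω → Fin q → ℝ)
    (f : (Fin q → ℝ) → ℝ) (hf : Measurable f)
    (hX : ∀ i, Measurable (X i)) (hZ : ∀ i, Measurable (Z i))
    (hiid : iIndepFun (fun i ω => (X i ω, Z i ω)) μ)
    (hident : ∀ i, IdentDistrib (fun ω => (X i ω, Z i ω)) (fun ω => (X 0 ω, Z 0 ω)) μ μ)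
    (hS1 : Integrable (fun ω => ‖X 0 ω‖ ^ 4) μ)
    (hS2 : Integrable (fun ω => |f (Z 0 ω)| ^ 4) μ)
    (hI : (SigmaXX μ (X 0)).PosDef)
    (hA : Integrable (fun ω =>
        (f (Z 0 ω) - X 0 ω ⬝ᵥ betaStar μ (X 0) (Z 0) f) ^ 2 * ‖X 0 ω‖ ^ 2) μ) :
    ∀ a b : Fin p,
      TendstoInMeasure μ (fun n ω => sandwichN X Z f n ω a b) atTop
        (fun _ => ((SigmaXX μ (X 0))⁻¹ * OmegaMat μ (X 0) (Z 0) f *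
          (SigmaXX μ (X 0))⁻¹) a b) := by
  set β := betaStar μ (X 0) (Z 0) f with hβ
  have hW : ∀ i, Measurable fun ω => (X i ω, Z i ω) := fun i => (hX i).prodMk (hZ i)
  -- generic SLLN
  have slln : ∀ (g : (Fin p → ℝ) × (Fin q → ℝ) → ℝ), Measurable g →
      Integrable (fun ω => g (X 0 ω, Z 0 ω)) μ →
      ∀ᵐ ω ∂μ, Tendsto (fun n : ℕ => (n : ℝ)⁻¹ * ∑ i ∈ Finset.range n, g (X i ω, Z i ω))
        atTop (𝓝 (∫ ω, g (X 0 ω, Z 0 ω) ∂μ)) := by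
    intro g hg hint
    have h := strong_law_ae_real (μ := μ) (fun i ω => g (X i ω, Z i ω)) hint
      (fun i j hij => ((hiid.indepFun hij).comp hg hg))
      (fun i => (hident i).comp hg)
    filter_upwards [h] with ω hω
    simpa [div_eq_inv_mul] using hω
  -- measurability of basic g's
  have hgx : ∀ a : Fin p, Measurable fun v : (Fin p → ℝ) × (Fin q → ℝ) => v.1 a :=
    fun a => (measurable_pi_apply a).comp measurable_fst
  have hgf : Measurable fun v : (Fin p → ℝ) × (Fin q → ℝ) => f v.2 := hf.comp measurable_snd
  have hgd : Measurable fun v : (Fin p → ℝ) × (Fin q → ℝ) => v.1 ⬝ᵥ β :=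
    Finset.measurable_sum _ fun c _ => (hgx c).mul_const _
  have hgr : Measurable fun v : (Fin p → ℝ) × (Fin q → ℝ) => f v.2 - v.1 ⬝ᵥ β := hgf.sub hgd
  -- pointwise coordinate bound
  have hcoord : ∀ (y : Fin p → ℝ) (a : Fin p), |y a| ≤ ‖y‖ := by
    intro y a
    simpa [Real.norm_eq_abs] using norm_le_pi_norm y a
  -- integrability facts
  have int1 : ∀ a b : Fin p, Integrable (fun ω => X 0 ω a * X 0 ω b) μ := by
    intro a b
    refine ((integrable_const 1).add hS1).mono
      ((((hgx a).mul (hgx b)).comp (hW 0)).aestronglyMeasurable) (ae_of_all _ fun ω => ?_)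
    have h1 := hcoord (X 0 ω) a
    have h2 := hcoord (X 0 ω) b
    have h0 : (0:ℝ) ≤ ‖X 0 ω‖ := norm_nonneg _
    simp only [Real.norm_eq_abs, Pi.add_apply]
    rw [abs_mul]
    have : |X 0 ω a| * |X 0 ω b| ≤ 1 + ‖X 0 ω‖ ^ 4 := by
      nlinarith [mul_le_mul h1 h2 (abs_nonneg (X 0 ω b)) h0, sq_nonneg (‖X 0 ω‖ ^ 2 - 1), sq_nonneg (‖X 0 ω‖)]
    calc |X 0 ω a| * |X 0 ω b| ≤ 1 + ‖X 0 ω‖ ^ 4 := this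
    _ ≤ |1 + ‖X 0 ω‖ ^ 4| := le_abs_self _
  have int2 : ∀ a : Fin p, Integrable (fun ω => X 0 ω a * f (Z 0 ω)) μ := by
    intro a
    refine (((integrable_const 1).add hS1).add hS2).mono
      (((hgx a).mul hgf).comp (hW 0)).aestronglyMeasurable (ae_of_all _ fun ω => ?_)
    have h1 := hcoord (X 0 ω) a
    have h0 : (0:ℝ) ≤ ‖X 0 ω‖ := norm_nonneg _
    have h2 : (0:ℝ) ≤ |f (Z 0 ω)| := abs_nonneg _
    simp only [Real.norm_eq_abs, Pi.add_apply]
    rw [abs_mul]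
    have : |X 0 ω a| * |f (Z 0 ω)| ≤ 1 + ‖X 0 ω‖ ^ 4 + |f (Z 0 ω)| ^ 4 := by
      nlinarith [mul_le_mul_of_nonneg_right h1 h2, sq_nonneg (‖X 0 ω‖ - |f (Z 0 ω)|),
        sq_nonneg (‖X 0 ω‖ ^ 2 - 1), sq_nonneg (|f (Z 0 ω)| ^ 2 - 1)]
    calc |X 0 ω a| * |f (Z 0 ω)| ≤ 1 + ‖X 0 ω‖ ^ 4 + |f (Z 0 ω)| ^ 4 := this
    _ ≤ |1 + ‖X 0 ω‖ ^ 4 + |f (Z 0 ω)| ^ 4| := le_abs_self _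
  have int3 : ∀ a b : Fin p,
      Integrable (fun ω => X 0 ω a * X 0 ω b * (f (Z 0 ω) - X 0 ω ⬝ᵥ β) ^ 2) μ := by
    intro a b
    refine hA.mono (((((hgx a).mul (hgx b)).mul (hgr.pow_const 2)).comp (hW 0)).aestronglyMeasurable) (ae_of_all _ fun ω => ?_)
    have h1 := hcoord (X 0 ω) a
    have h2 := hcoord (X 0 ω) b
    have h0 : (0:ℝ) ≤ ‖X 0 ω‖ := norm_nonneg _
    simp only [Real.norm_eq_abs]
    rw [abs_mul, abs_mul]
    have hr : |(f (Z 0 ω) - X 0 ω ⬝ᵥ β) ^ 2| = (f (Z 0 ω) - X 0 ω ⬝ᵥ β) ^ 2 := abs_of_nonneg (sq_nonneg _)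
    rw [hr]
    have : |X 0 ω a| * |X 0 ω b| * (f (Z 0 ω) - X 0 ω ⬝ᵥ β) ^ 2
        ≤ (f (Z 0 ω) - X 0 ω ⬝ᵥ β) ^ 2 * ‖X 0 ω‖ ^ 2 := by
      nlinarith [mul_le_mul h1 h2 (abs_nonneg (X 0 ω b)) h0, sq_nonneg (f (Z 0 ω) - X 0 ω ⬝ᵥ β),
        mul_le_mul_of_nonneg_right (mul_le_mul h1 h2 (abs_nonneg (X 0 ω b)) h0) (sq_nonneg (f (Z 0 ω) - X 0 ω ⬝ᵥ β))]
    exact this.trans (le_abs_self _)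
  have int4 : ∀ a b c : Fin p,
      Integrable (fun ω => X 0 ω a * X 0 ω b * X 0 ω c * (f (Z 0 ω) - X 0 ω ⬝ᵥ β)) μ := by
    intro a b c
    refine (hS1.add hA).mono
      ((((((hgx a).mul (hgx b)).mul (hgx c)).mul hgr).comp (hW 0)).aestronglyMeasurable) (ae_of_all _ fun ω => ?_)
    have h1 := hcoord (X 0 ω) a
    have h2 := hcoord (X 0 ω) b
    have h3 := hcoord (X 0 ω) c
    have h0 : (0:ℝ) ≤ ‖X 0 ω‖ := norm_nonneg _
    simp only [Real.norm_eq_abs, Pi.add_apply]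
    rw [abs_mul, abs_mul, abs_mul]
    have key : |X 0 ω a| * |X 0 ω b| * |X 0 ω c| * |f (Z 0 ω) - X 0 ω ⬝ᵥ β|
        ≤ ‖X 0 ω‖ ^ 4 + (f (Z 0 ω) - X 0 ω ⬝ᵥ β) ^ 2 * ‖X 0 ω‖ ^ 2 := by
      have m1 : |X 0 ω a| * |X 0 ω b| ≤ ‖X 0 ω‖ * ‖X 0 ω‖ :=
        mul_le_mul h1 h2 (abs_nonneg _) h0
      have m2 : |X 0 ω c| * |f (Z 0 ω) - X 0 ω ⬝ᵥ β| ≤ ‖X 0 ω‖ * |f (Z 0 ω) - X 0 ω ⬝ᵥ β| :=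
        mul_le_mul_of_nonneg_right h3 (abs_nonneg _)
      have m3 : |X 0 ω a| * |X 0 ω b| * (|X 0 ω c| * |f (Z 0 ω) - X 0 ω ⬝ᵥ β|)
          ≤ (‖X 0 ω‖ * ‖X 0 ω‖) * (‖X 0 ω‖ * |f (Z 0 ω) - X 0 ω ⬝ᵥ β|) :=
        mul_le_mul m1 m2 (mul_nonneg (abs_nonneg _) (abs_nonneg _))
          (mul_nonneg h0 h0)
      nlinarith [m3, mul_nonneg (mul_nonneg h0 h0)
        (sq_nonneg (‖X 0 ω‖ - |f (Z 0 ω) - X 0 ω ⬝ᵥ β|)),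
        sq_abs (f (Z 0 ω) - X 0 ω ⬝ᵥ β)]
    exact key.trans (le_abs_self _)
  have int5 : ∀ a b c d : Fin p,
      Integrable (fun ω => X 0 ω a * X 0 ω b * X 0 ω c * X 0 ω d) μ := by
    intro a b c d
    refine hS1.mono ((((((hgx a).mul (hgx b)).mul (hgx c)).mul (hgx d)).comp (hW 0)).aestronglyMeasurable) (ae_of_all _ fun ω => ?_)
    have h1 := hcoord (X 0 ω) a
    have h2 := hcoord (X 0 ω) b
    have h3 := hcoord (X 0 ω) c
    have h4 := hcoord (X 0 ω) d
    have h0 : (0:ℝ) ≤ ‖X 0 ω‖ := norm_nonneg _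
    simp only [Real.norm_eq_abs]
    rw [abs_mul, abs_mul, abs_mul]
    have : |X 0 ω a| * |X 0 ω b| * |X 0 ω c| * |X 0 ω d| ≤ ‖X 0 ω‖ ^ 4 := by
      have m1 : |X 0 ω a| * |X 0 ω b| ≤ ‖X 0 ω‖ * ‖X 0 ω‖ :=
        mul_le_mul h1 h2 (abs_nonneg _) h0
      have m2 : |X 0 ω c| * |X 0 ω d| ≤ ‖X 0 ω‖ * ‖X 0 ω‖ :=
        mul_le_mul h3 h4 (abs_nonneg _) h0
      have m3 : |X 0 ω a| * |X 0 ω b| * (|X 0 ω c| * |X 0 ω d|)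
          ≤ (‖X 0 ω‖ * ‖X 0 ω‖) * (‖X 0 ω‖ * ‖X 0 ω‖) :=
        mul_le_mul m1 m2 (mul_nonneg (abs_nonneg _) (abs_nonneg _)) (mul_nonneg h0 h0)
      nlinarith [m3]
    exact this.trans (le_abs_self _)
  -- a.e. SLLN facts
  have H1 : ∀ᵐ ω ∂μ, ∀ a b : Fin p,
      Tendsto (fun n : ℕ => (n : ℝ)⁻¹ * ∑ i ∈ Finset.range n, X i ω a * X i ω b)
        atTop (𝓝 (SigmaXX μ (X 0) a b)) :=
    ae_all_iff.2 fun a => ae_all_iff.2 fun b =>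
      slln (fun v => v.1 a * v.1 b) ((hgx a).mul (hgx b)) (int1 a b)
  have H2 : ∀ᵐ ω ∂μ, ∀ a : Fin p,
      Tendsto (fun n : ℕ => (n : ℝ)⁻¹ * ∑ i ∈ Finset.range n, X i ω a * f (Z i ω))
        atTop (𝓝 (∫ ω, X 0 ω a * f (Z 0 ω) ∂μ)) :=
    ae_all_iff.2 fun a => slln (fun v => v.1 a * f v.2) ((hgx a).mul hgf) (int2 a)
  have H3 : ∀ᵐ ω ∂μ, ∀ a b : Fin p,
      Tendsto (fun n : ℕ => (n : ℝ)⁻¹ * ∑ i ∈ Finset.range n,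
          X i ω a * X i ω b * (f (Z i ω) - X i ω ⬝ᵥ β) ^ 2)
        atTop (𝓝 (OmegaMat μ (X 0) (Z 0) f a b)) :=
    ae_all_iff.2 fun a => ae_all_iff.2 fun b =>
      slln (fun v => v.1 a * v.1 b * (f v.2 - v.1 ⬝ᵥ β) ^ 2)
        (((hgx a).mul (hgx b)).mul (hgr.pow_const 2)) (int3 a b)
  have H4 : ∀ᵐ ω ∂μ, ∀ a b c : Fin p,
      Tendsto (fun n : ℕ => (n : ℝ)⁻¹ * ∑ i ∈ Finset.range n,
          X i ω a * X i ω b * X i ω c * (f (Z i ω) - X i ω ⬝ᵥ β))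
        atTop (𝓝 (∫ ω, X 0 ω a * X 0 ω b * X 0 ω c * (f (Z 0 ω) - X 0 ω ⬝ᵥ β) ∂μ)) :=
    ae_all_iff.2 fun a => ae_all_iff.2 fun b => ae_all_iff.2 fun c =>
      slln (fun v => v.1 a * v.1 b * v.1 c * (f v.2 - v.1 ⬝ᵥ β))
        ((((hgx a).mul (hgx b)).mul (hgx c)).mul hgr) (int4 a b c)
  have H5 : ∀ᵐ ω ∂μ, ∀ a b c d : Fin p,
      Tendsto (fun n : ℕ => (n : ℝ)⁻¹ * ∑ i ∈ Finset.range n,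
          X i ω a * X i ω b * X i ω c * X i ω d)
        atTop (𝓝 (∫ ω, X 0 ω a * X 0 ω b * X 0 ω c * X 0 ω d ∂μ)) :=
    ae_all_iff.2 fun a => ae_all_iff.2 fun b => ae_all_iff.2 fun c => ae_all_iff.2 fun d =>
      slln (fun v => v.1 a * v.1 b * v.1 c * v.1 d)
        ((((hgx a).mul (hgx b)).mul (hgx c)).mul (hgx d)) (int5 a b c d)
  intro a b
  have hdet : (SigmaXX μ (X 0)).det ≠ 0 := hI.det_pos.ne'
  -- measurability of the sandwich entries
  have hmeas : ∀ n : ℕ, AEStronglyMeasurable (fun ω => sandwichN X Z f n ω a b) μ := by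
    intro n
    have mG : ∀ i j : Fin p, Measurable fun ω => gramN X n ω i j := by
      intro i j
      simp only [gramN, Matrix.sum_apply, Matrix.vecMulVec_apply]
      exact Finset.measurable_sum _ fun k _ =>
        ((measurable_pi_apply i).comp (hX k)).mul ((measurable_pi_apply j).comp (hX k))
    have mols : ∀ c : Fin p, Measurable fun ω => olsN X Z f n ω c := by
      intro c
      have : (fun ω => olsN X Z f n ω c)
          = fun ω => ∑ k : Fin p, (gramN X n ω)⁻¹ c k *
              ∑ i ∈ Finset.range n, f (Z i ω) * X i ω k := by
        funext ω
        simp [olsN, Matrix.mulVec, dotProduct, Finset.sum_apply]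
      rw [this]
      exact Finset.measurable_sum _ fun k _ => (aux_measurable_inv mG c k).mul
        (Finset.measurable_sum _ fun i _ =>
          (hf.comp (hZ i)).mul ((measurable_pi_apply k).comp (hX i)))
    have mr : ∀ i : ℕ, Measurable fun ω => f (Z i ω) - X i ω ⬝ᵥ olsN X Z f n ω := by
      intro i
      refine (hf.comp (hZ i)).sub ?_
      exact Finset.measurable_sum _ fun c _ =>
        ((measurable_pi_apply c).comp (hX i)).mul (mols c)
    have hrepr : (fun ω => sandwichN X Z f n ω a b)
        = fun ω => (n : ℝ) * ∑ l' : Fin p,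
            (∑ k' : Fin p, (gramN X n ω)⁻¹ a k' *
              ∑ i ∈ Finset.range n, (f (Z i ω) - X i ω ⬝ᵥ olsN X Z f n ω) ^ 2 *
                (X i ω k' * X i ω l')) * (gramN X n ω)⁻¹ l' b := by
      funext ω
      simp [sandwichN, Matrix.smul_apply, Matrix.mul_apply, Matrix.sum_apply,
        Matrix.vecMulVec_apply, smul_eq_mul, Finset.sum_mul]
    rw [hrepr]
    refine (measurable_const.mul (Finset.measurable_sum _ fun l' _ =>
      ((Finset.measurable_sum _ fun k' _ => (aux_measurable_inv mG a k').mul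
        (Finset.measurable_sum _ fun i _ => ((mr i).pow_const 2).mul
          (((measurable_pi_apply k').comp (hX i)).mul
            ((measurable_pi_apply l').comp (hX i))))).mul
        (aux_measurable_inv mG l' b)))).aestronglyMeasurable
  refine tendstoInMeasure_of_tendsto_ae hmeas ?_
  filter_upwards [H1, H2, H3, H4, H5] with ω h1 h2 h3 h4 h5
  -- the rescaled Gram matrix converges
  have hBmat : Tendsto (fun n : ℕ => (n : ℝ)⁻¹ • gramN X n ω) atTop (𝓝 (SigmaXX μ (X 0))) := by
    apply tendsto_pi_nhds.2
    intro i
    rw [tendsto_pi_nhds]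
    intro j
    have : (fun n : ℕ => ((n : ℝ)⁻¹ • gramN X n ω) i j)
        = fun n : ℕ => (n : ℝ)⁻¹ * ∑ k ∈ Finset.range n, X k ω i * X k ω j := by
      funext n
      simp [gramN, Matrix.smul_apply, Matrix.sum_apply, Matrix.vecMulVec_apply]
    rw [this]
    exact h1 i j
  have hBinvmat : Tendsto (fun n : ℕ => ((n : ℝ)⁻¹ • gramN X n ω)⁻¹) atTop
      (𝓝 (SigmaXX μ (X 0))⁻¹) :=
    (aux_cont_inv _ hdet).tendsto.comp hBmat
  have hBinv : ∀ i j : Fin p, Tendsto (fun n : ℕ => ((n : ℝ)⁻¹ • gramN X n ω)⁻¹ i j)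
      atTop (𝓝 ((SigmaXX μ (X 0))⁻¹ i j)) := fun i j =>
    tendsto_pi_nhds.1 (tendsto_pi_nhds.1 hBinvmat i) j
  -- OLS convergence
  have holsN : ∀ c : Fin p, Tendsto (fun n : ℕ => olsN X Z f n ω c) atTop (𝓝 (β c)) := by
    intro c
    have hlim : Tendsto (fun n : ℕ => ∑ k : Fin p, ((n : ℝ)⁻¹ • gramN X n ω)⁻¹ c k *
        ((n : ℝ)⁻¹ * ∑ i ∈ Finset.range n, X i ω k * f (Z i ω))) atTop
        (𝓝 (∑ k : Fin p, (SigmaXX μ (X 0))⁻¹ c k * ∫ ω', X 0 ω' k * f (Z 0 ω') ∂μ)) :=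
      tendsto_finset_sum _ fun k _ => (hBinv c k).mul (h2 k)
    have hβc : β c = ∑ k : Fin p, (SigmaXX μ (X 0))⁻¹ c k
        * ∫ ω', X 0 ω' k * f (Z 0 ω') ∂μ := by
      rw [hβ]
      simp [betaStar, Matrix.mulVec, dotProduct]
    rw [hβc]
    refine hlim.congr' ?_
    filter_upwards [eventually_ge_atTop 1] with n hn
    have hn0 : (n : ℝ) ≠ 0 := Nat.cast_ne_zero.2 (by omega)
    have hinv : (gramN X n ω)⁻¹ = (n : ℝ)⁻¹ • ((n : ℝ)⁻¹ • gramN X n ω)⁻¹ := by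
      conv_lhs => rw [show gramN X n ω = (n : ℝ) • ((n : ℝ)⁻¹ • gramN X n ω) by
        rw [smul_smul, mul_inv_cancel₀ hn0, one_smul]]
      rw [aux_smul_inv _ hn0]
    show _ = olsN X Z f n ω c
    rw [olsN, hinv]
    simp only [Matrix.mulVec, dotProduct, Matrix.smul_apply, smul_eq_mul,
      Finset.sum_apply, Pi.smul_apply]
    refine Finset.sum_congr rfl fun k _ => ?_
    rw [show (∑ i ∈ Finset.range n, f (Z i ω) * X i ω k)
        = ∑ i ∈ Finset.range n, X i ω k * f (Z i ω) from
      Finset.sum_congr rfl fun i _ => mul_comm _ _]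
    ring
  have hdelta : ∀ c : Fin p, Tendsto (fun n : ℕ => olsN X Z f n ω c - β c) atTop (𝓝 0) :=
    fun c => by simpa using (holsN c).sub (tendsto_const_nhds (x := β c))
  -- convergence of the meat matrix entries
  have hS' : ∀ k l : Fin p, Tendsto (fun n : ℕ => (n : ℝ)⁻¹ *
      ∑ i ∈ Finset.range n,
        (f (Z i ω) - X i ω ⬝ᵥ olsN X Z f n ω) ^ 2 * (X i ω k * X i ω l)) atTop
      (𝓝 (OmegaMat μ (X 0) (Z 0) f k l)) := by
    intro k l
    have hrw : ∀ n : ℕ, (n : ℝ)⁻¹ * ∑ i ∈ Finset.range n,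
        (f (Z i ω) - X i ω ⬝ᵥ olsN X Z f n ω) ^ 2 * (X i ω k * X i ω l)
        = (n : ℝ)⁻¹ * (∑ i ∈ Finset.range n, X i ω k * X i ω l * (f (Z i ω) - X i ω ⬝ᵥ β) ^ 2)
          - ∑ c : Fin p, (olsN X Z f n ω c - β c) *
              (2 * ((n : ℝ)⁻¹ * ∑ i ∈ Finset.range n,
                  X i ω k * X i ω l * X i ω c * (f (Z i ω) - X i ω ⬝ᵥ β))
                - ∑ d : Fin p, (olsN X Z f n ω d - β d) *
                    ((n : ℝ)⁻¹ * ∑ i ∈ Finset.range n,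
                      X i ω k * X i ω l * X i ω c * X i ω d)) := by
      intro n
      have hsub : ∀ i ∈ Finset.range n,
          (f (Z i ω) - X i ω ⬝ᵥ olsN X Z f n ω) ^ 2 * (X i ω k * X i ω l)
          = ((f (Z i ω) - X i ω ⬝ᵥ β) - X i ω ⬝ᵥ (fun c => olsN X Z f n ω c - β c)) ^ 2
              * (X i ω k * X i ω l) := by
        intro i _
        have hdp : X i ω ⬝ᵥ (fun c => olsN X Z f n ω c - β c)
            = X i ω ⬝ᵥ olsN X Z f n ω - X i ω ⬝ᵥ β := by
          simp [dotProduct, mul_sub, Finset.sum_sub_distrib]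
        rw [hdp]
        ring
      rw [Finset.sum_congr rfl hsub,
        aux_key n (fun i => X i ω) (fun i => f (Z i ω) - X i ω ⬝ᵥ β)
          (fun c => olsN X Z f n ω c - β c) k l,
        aux_dist]
    refine Tendsto.congr (fun n => (hrw n).symm) ?_
    have hsum0 : Tendsto (fun n : ℕ => ∑ c : Fin p, (olsN X Z f n ω c - β c) *
        (2 * ((n : ℝ)⁻¹ * ∑ i ∈ Finset.range n,
            X i ω k * X i ω l * X i ω c * (f (Z i ω) - X i ω ⬝ᵥ β))
          - ∑ d : Fin p, (olsN X Z f n ω d - β d) *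
              ((n : ℝ)⁻¹ * ∑ i ∈ Finset.range n,
                X i ω k * X i ω l * X i ω c * X i ω d))) atTop (𝓝 0) := by
      have := tendsto_finset_sum (Finset.univ : Finset (Fin p)) fun c _ =>
        (hdelta c).mul (((h4 k l c).const_mul 2).sub
          (tendsto_finset_sum (Finset.univ : Finset (Fin p)) fun d _ =>
            (hdelta d).mul (h5 k l c d)))
      simpa using this
    simpa using (h3 k l).sub hsum0
  -- final assembly
  have htarget : ((SigmaXX μ (X 0))⁻¹ * OmegaMat μ (X 0) (Z 0) f * (SigmaXX μ (X 0))⁻¹) a b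
      = ∑ l' : Fin p, (∑ k' : Fin p, (SigmaXX μ (X 0))⁻¹ a k' * OmegaMat μ (X 0) (Z 0) f k' l')
          * (SigmaXX μ (X 0))⁻¹ l' b := by
    simp [Matrix.mul_apply]
  rw [htarget]
  have hfin : Tendsto (fun n : ℕ => ∑ l' : Fin p,
      (∑ k' : Fin p, ((n : ℝ)⁻¹ • gramN X n ω)⁻¹ a k' *
        ((n : ℝ)⁻¹ * ∑ i ∈ Finset.range n,
          (f (Z i ω) - X i ω ⬝ᵥ olsN X Z f n ω) ^ 2 * (X i ω k' * X i ω l')))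
        * ((n : ℝ)⁻¹ • gramN X n ω)⁻¹ l' b) atTop
      (𝓝 (∑ l' : Fin p, (∑ k' : Fin p, (SigmaXX μ (X 0))⁻¹ a k'
          * OmegaMat μ (X 0) (Z 0) f k' l') * (SigmaXX μ (X 0))⁻¹ l' b)) :=
    tendsto_finset_sum _ fun l' _ =>
      (tendsto_finset_sum _ fun k' _ => (hBinv a k').mul (hS' k' l')).mul (hBinv l' b)
  refine hfin.congr' ?_
  filter_upwards [eventually_ge_atTop 1] with n hn
  have hn0 : (n : ℝ) ≠ 0 := Nat.cast_ne_zero.2 (by omega)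
  have hinv : (gramN X n ω)⁻¹ = (n : ℝ)⁻¹ • ((n : ℝ)⁻¹ • gramN X n ω)⁻¹ := by
    conv_lhs => rw [show gramN X n ω = (n : ℝ) • ((n : ℝ)⁻¹ • gramN X n ω) by
      rw [smul_smul, mul_inv_cancel₀ hn0, one_smul]]
    rw [aux_smul_inv _ hn0]
  show _ = sandwichN X Z f n ω a b
  rw [sandwichN, hinv]
  simp only [Matrix.smul_apply, Matrix.smul_mul, Matrix.mul_smul, smul_eq_mul,
    Matrix.mul_apply, Matrix.sum_apply, Matrix.vecMulVec_apply]
  rw [show ∀ T : ℝ, (n : ℝ) * ((n : ℝ)⁻¹ * ((n : ℝ)⁻¹ * T)) = (n : ℝ)⁻¹ * T from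
    fun T => by field_simp]
  rw [Finset.mul_sum]
  refine Finset.sum_congr rfl fun l' _ => ?_
  rw [show (∑ k' : Fin p, ((n : ℝ)⁻¹ • gramN X n ω)⁻¹ a k' *
        ((n : ℝ)⁻¹ * ∑ i ∈ Finset.range n,
          (f (Z i ω) - X i ω ⬝ᵥ olsN X Z f n ω) ^ 2 * (X i ω k' * X i ω l')))
      = (n : ℝ)⁻¹ * ∑ k' : Fin p, ((n : ℝ)⁻¹ • gramN X n ω)⁻¹ a k' *
          ∑ i ∈ Finset.range n,
            (f (Z i ω) - X i ω ⬝ᵥ olsN X Z f n ω) ^ 2 * (X i ω k' * X i ω l') from by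
    rw [Finset.mul_sum]
    exact Finset.sum_congr rfl fun k' _ => by ring]
  ring
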